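/- The power series H(z) = Σ_{n≥2} z^n / ( n! (2^{n-1} − 1) ) defines an entire function on ℂ which satisfies the functional equation H(2z) = 2H(z) + 2(e^z − 1 − z) for all z ∈ ℂ, admits the alternative representation H(z) = Σ_{j≥1} 2^j ( e^{z/2^j} − 1 − z/2^j ) (the series converging for every z), and obeys the growth bound |H(z)| ≤ 4 e^{|z|/2} for all z ∈ ℂ. -/

import Mathlib

open Complex

lemma real_exp_tsum (x : ℝ) : Real.exp x = ∑' n : ℕ, x ^ n / n.factorial := by
  rw [Real.exp_eq_exp_ℝ, NormedSpace.exp_eq_tsum_div]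

lemma summable_exp_series (w : ℂ) : Summable (fun n : ℕ => w ^ n / (n.factorial : ℂ)) := by
  apply Summable.of_norm
  have : (fun n : ℕ => ‖w ^ n / (n.factorial : ℂ)‖) = fun n => ‖w‖ ^ n / n.factorial := by
    funext n
    rw [norm_div, norm_pow]
    simp
  rw [this]
  exact Real.summable_pow_div_factorial ‖w‖

lemma expAux (w : ℂ) :
    HasSum (fun n : ℕ => w ^ (n + 2) / ((n + 2).factorial : ℂ))
      (Complex.exp w - 1 - w) := by
  have hs := summable_exp_series w
  have hs1 : Summable (fun n : ℕ => w ^ (n + 1) / ((n + 1).factorial : ℂ)) :=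
    hs.comp_injective (add_left_injective 1)
  have hs2 : Summable (fun n : ℕ => w ^ (n + 2) / ((n + 2).factorial : ℂ)) :=
    hs.comp_injective (add_left_injective 2)
  have hexp : Complex.exp w = ∑' n : ℕ, w ^ n / n.factorial := by
    rw [Complex.exp_eq_exp_ℂ, NormedSpace.exp_eq_tsum_div]
  have h0 := Summable.tsum_eq_zero_add hs
  have h1 := Summable.tsum_eq_zero_add hs1
  have key : ∑' n : ℕ, w ^ (n + 2) / ((n + 2).factorial : ℂ) = Complex.exp w - 1 - w := by
    rw [hexp, h0, h1]
    simp [Nat.factorial]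
  exact key ▸ hs2.hasSum

lemma norm_two_pow_sub_one (n : ℕ) : ‖(2 : ℂ) ^ (n + 1) - 1‖ = 2 ^ (n + 1) - 1 := by
  have h : (2 : ℂ) ^ (n + 1) - 1 = (((2 : ℝ) ^ (n + 1) - 1 : ℝ) : ℂ) := by push_cast; ring
  rw [h, Complex.norm_real, Real.norm_eq_abs]
  have h1 : (1:ℝ) ≤ 2 ^ (n+1) := one_le_pow₀ (by norm_num)
  exact abs_of_nonneg (by linarith)

lemma two_pow_sub_one_ne (n : ℕ) : (2 : ℂ) ^ (n + 1) - 1 ≠ 0 := by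
  rw [← norm_ne_zero_iff, norm_two_pow_sub_one]
  have : (2:ℝ) ≤ 2 ^ (n+1) := by
    calc (2:ℝ) = 2^1 := by norm_num
    _ ≤ 2^(n+1) := pow_le_pow_right₀ (by norm_num) (by omega)
  linarith

lemma expBound (w : ℂ) :
    ‖Complex.exp w - 1 - w‖ ≤ ‖w‖ ^ 2 * Real.exp ‖w‖ := by
  have h := (expAux w).tsum_eq
  rw [← h]
  have hnorm : ∀ n : ℕ, ‖w ^ (n + 2) / ((n + 2).factorial : ℂ)‖
      = ‖w‖ ^ (n + 2) / ((n + 2).factorial : ℝ) := by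
    intro n; rw [norm_div, norm_pow]; simp
  have hsn : Summable (fun n : ℕ => ‖w ^ (n + 2) / ((n + 2).factorial : ℂ)‖) := by
    simp only [hnorm]
    exact (Real.summable_pow_div_factorial ‖w‖).comp_injective (add_left_injective 2)
  refine le_trans (norm_tsum_le_tsum_norm hsn) ?_
  have hb : ∀ n : ℕ, ‖w ^ (n + 2) / ((n + 2).factorial : ℂ)‖
      ≤ ‖w‖ ^ 2 * (‖w‖ ^ n / (n.factorial : ℝ)) := by
    intro n
    rw [hnorm, pow_add, mul_comm (‖w‖^n), mul_div_assoc]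
    apply mul_le_mul_of_nonneg_left _ (by positivity)
    apply div_le_div_of_nonneg_left (by positivity) (by positivity)
    exact_mod_cast Nat.factorial_le (by omega)
  refine le_trans (Summable.tsum_le_tsum hb hsn ?_) ?_
  · exact ((Real.summable_pow_div_factorial ‖w‖)).mul_left _
  · rw [tsum_mul_left, real_exp_tsum]

set_option maxHeartbeats 1600000 in
lemma auxA (z : ℂ) :
    HasSum (fun n : ℕ => z ^ (n + 2) / (((n + 2).factorial : ℂ) * ((2 : ℂ) ^ (n + 1) - 1)))
      (∑' j : ℕ, (2 : ℂ) ^ (j + 1) * (Complex.exp (z / 2 ^ (j + 1)) - 1 - z / 2 ^ (j + 1))) ∧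
    Summable (fun j : ℕ =>
      (2 : ℂ) ^ (j + 1) * (Complex.exp (z / 2 ^ (j + 1)) - 1 - z / 2 ^ (j + 1))) := by
  set G : ℕ × ℕ → ℂ := fun p =>
    (2 : ℂ) ^ (p.1 + 1) * ((z / 2 ^ (p.1 + 1)) ^ (p.2 + 2) / ((p.2 + 2).factorial : ℂ)) with hGdef
  -- norm bound
  have key : ∀ j n : ℕ, ‖G (j, n)‖
      ≤ (1/2 : ℝ) ^ (j + 1) * ((1/2) ^ n * (‖z‖ ^ (n + 2) / ((n + 2).factorial : ℝ))) := by
    intro j n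
    have h1 : ‖G (j, n)‖ = 2 ^ (j + 1) * ((‖z‖ / 2 ^ (j + 1)) ^ (n + 2) / ((n + 2).factorial : ℝ)) := by
      simp [hGdef, norm_mul, norm_div, norm_pow]
    rw [h1, div_pow, ← pow_mul]
    have hle : (2:ℝ) ^ (j+1) / (2:ℝ) ^ ((j+1)*(n+2)) ≤ 1 / 2 ^ (j+1+n) := by
      rw [div_le_div_iff₀ (by positivity) (by positivity), one_mul, ← pow_add]
      exact pow_le_pow_right₀ (by norm_num) (by nlinarith)
    calc (2:ℝ) ^ (j+1) * (‖z‖ ^ (n+2) / (2:ℝ) ^ ((j+1)*(n+2)) / ((n + 2).factorial : ℝ))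
        = ((2:ℝ) ^ (j+1) / (2:ℝ) ^ ((j+1)*(n+2))) * (‖z‖ ^ (n+2) / ((n + 2).factorial : ℝ)) := by
          ring
      _ ≤ (1 / 2 ^ (j+1+n)) * (‖z‖ ^ (n+2) / ((n + 2).factorial : ℝ)) := by
          apply mul_le_mul_of_nonneg_right hle (by positivity)
      _ = (1/2 : ℝ) ^ (j + 1) * ((1/2) ^ n * (‖z‖ ^ (n + 2) / ((n + 2).factorial : ℝ))) := by
          rw [div_pow, div_pow, one_pow, one_pow]
          field_simp
          ring_nf
  -- summability of norms on the product
  have c_sum : Summable (fun j : ℕ => (1/2:ℝ) ^ (j+1)) :=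
    (summable_geometric_of_lt_one (by norm_num) (by norm_num)).comp_injective
      (add_left_injective 1)
  have d_sum : Summable (fun n : ℕ => (1/2:ℝ) ^ n * (‖z‖ ^ (n+2) / ((n + 2).factorial : ℝ))) := by
    apply Summable.of_nonneg_of_le (fun n => by positivity)
      (f := fun n => ‖z‖ ^ (n + 2) / ((n + 2).factorial : ℝ))
    · intro n
      have h2 : ((1:ℝ)/2) ^ n ≤ 1 := pow_le_one₀ (by norm_num) (by norm_num)
      have h3 : (0:ℝ) ≤ ‖z‖ ^ (n + 2) / ((n + 2).factorial : ℝ) := by positivity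
      nlinarith
    · exact (Real.summable_pow_div_factorial ‖z‖).comp_injective (add_left_injective 2)
  have prod_sum : Summable (fun p : ℕ × ℕ =>
      (1/2:ℝ) ^ (p.1+1) * ((1/2:ℝ) ^ p.2 * (‖z‖ ^ (p.2+2) / ((p.2 + 2).factorial : ℝ)))) :=
    c_sum.mul_of_nonneg d_sum (fun j => by positivity) (fun n => by positivity)
  have hG : Summable G :=
    Summable.of_norm_bounded prod_sum (fun p => key p.1 p.2)
  -- row sums
  have hrow : ∀ j : ℕ, HasSum (fun n => G (j, n))
      ((2 : ℂ) ^ (j + 1) * (Complex.exp (z / 2 ^ (j + 1)) - 1 - z / 2 ^ (j + 1))) :=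
    fun j => (expAux (z / 2 ^ (j + 1))).mul_left _
  have htot : HasSum
      (fun j : ℕ => (2 : ℂ) ^ (j + 1) * (Complex.exp (z / 2 ^ (j + 1)) - 1 - z / 2 ^ (j + 1)))
      (∑' p, G p) := hG.hasSum.prod_fiberwise hrow
  -- column sums
  have hcol : ∀ n : ℕ, HasSum (fun j => G (j, n))
      (z ^ (n + 2) / (((n + 2).factorial : ℂ) * ((2 : ℂ) ^ (n + 1) - 1))) := by
    intro n
    have h2 : (2 : ℂ) ^ (n + 1) ≠ 0 := pow_ne_zero _ two_ne_zero
    have hne := two_pow_sub_one_ne n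
    have hr : ‖((2 : ℂ) ^ (n + 1))⁻¹‖ < 1 := by
      have hn : ‖(2:ℂ) ^ (n+1)‖ = 2 ^ (n+1) := by rw [norm_pow]; norm_num
      rw [norm_inv, hn, inv_lt_one_iff₀]
      right
      exact one_lt_pow₀ (by norm_num) (by omega)
    have hgeo : HasSum (fun j : ℕ => (((2 : ℂ) ^ (n + 1))⁻¹) ^ j)
        (1 - ((2 : ℂ) ^ (n + 1))⁻¹)⁻¹ := hasSum_geometric_of_norm_lt_one hr
    have hshift : HasSum (fun j : ℕ => (((2 : ℂ) ^ (n + 1))⁻¹) ^ (j + 1))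
        ((1 - ((2 : ℂ) ^ (n + 1))⁻¹)⁻¹ - 1) := by
      have := (hasSum_nat_add_iff' 1).mpr hgeo
      simpa using this
    have heq : ∀ j : ℕ, G (j, n)
        = (z ^ (n + 2) / ((n + 2).factorial : ℂ)) * (((2 : ℂ) ^ (n + 1))⁻¹) ^ (j + 1) := by
      intro j
      have e1 : (((2:ℂ) ^ (n+1))⁻¹) ^ (j+1)
          = 2 ^ (j+1) * ((2:ℂ)⁻¹) ^ ((j+1)*(n+2)) := by
        rw [show (j+1)*(n+2) = (j+1) + (n+1)*(j+1) by ring,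
          pow_add ((2:ℂ)⁻¹) (j+1) ((n+1)*(j+1)), ← mul_assoc, ← mul_pow,
          mul_inv_cancel₀ (two_ne_zero), one_pow, one_mul, ← inv_pow, ← pow_mul]
      simp only [hGdef]
      rw [e1, div_pow, ← pow_mul, inv_pow, ← div_eq_mul_inv]
      ring
    have := hshift.mul_left (z ^ (n + 2) / ((n + 2).factorial : ℂ))
    have hval : (z ^ (n + 2) / ((n + 2).factorial : ℂ)) * ((1 - ((2 : ℂ) ^ (n + 1))⁻¹)⁻¹ - 1)
        = z ^ (n + 2) / (((n + 2).factorial : ℂ) * ((2 : ℂ) ^ (n + 1) - 1)) := by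
      have hf : ((n + 2).factorial : ℂ) ≠ 0 := by exact_mod_cast (n+2).factorial_ne_zero
      field_simp
      ring
    rw [hval] at this
    rw [show (fun j : ℕ => G (j, n)) = fun j : ℕ =>
      (z ^ (n + 2) / ((n + 2).factorial : ℂ)) * (((2 : ℂ) ^ (n + 1))⁻¹) ^ (j + 1)
      from funext heq]
    exact this
  have hswap : HasSum
      (fun n : ℕ => z ^ (n + 2) / (((n + 2).factorial : ℂ) * ((2 : ℂ) ^ (n + 1) - 1)))
      (∑' p, G p) := by
    have he : HasSum (G ∘ (Equiv.prodComm ℕ ℕ)) (∑' p, G p) :=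
      ((Equiv.prodComm ℕ ℕ).hasSum_iff).mpr hG.hasSum
    exact he.prod_fiberwise (fun n => hcol n)
  exact ⟨htot.tsum_eq ▸ hswap, htot.summable⟩

set_option maxHeartbeats 1600000 in
/-- the power series `H(z) = Σ_{n≥2} z^n/(n!(2^{n-1}-1))` defines an entire
function satisfying `H(2z) = 2H(z) + 2(e^z - 1 - z)`, admitting the representation
`H(z) = Σ_{j≥1} 2^j (e^{z/2^j} - 1 - z/2^j)` (the series converging for every `z`), and
obeying `|H(z)| ≤ 4 e^{|z|/2}`. -/
theorem stmt15 (H : ℂ → ℂ)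
    (hH : ∀ z : ℂ, H z = ∑' n : ℕ,
      z ^ (n + 2) / (((n + 2).factorial : ℂ) * ((2 : ℂ) ^ (n + 1) - 1))) :
    Differentiable ℂ H ∧
    (∀ z : ℂ, H (2 * z) = 2 * H z + 2 * (Complex.exp z - 1 - z)) ∧
    (∀ z : ℂ,
      Summable (fun j : ℕ =>
        (2 : ℂ) ^ (j + 1) *
          (Complex.exp (z / 2 ^ (j + 1)) - 1 - z / 2 ^ (j + 1))) ∧
      H z = ∑' j : ℕ,
        (2 : ℂ) ^ (j + 1) *
          (Complex.exp (z / 2 ^ (j + 1)) - 1 - z / 2 ^ (j + 1))) ∧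
    ∀ z : ℂ, ‖H z‖ ≤ 4 * Real.exp (‖z‖ / 2) := by
  have part3 : ∀ w : ℂ, H w = ∑' j : ℕ,
      (2 : ℂ) ^ (j + 1) * (Complex.exp (w / 2 ^ (j + 1)) - 1 - w / 2 ^ (j + 1)) :=
    fun w => by rw [hH w, ((auxA w).1).tsum_eq]
  refine ⟨?_, ?_, fun z => ⟨(auxA z).2, part3 z⟩, ?_⟩
  · -- differentiability
    intro z₀
    set R : ℝ := ‖z₀‖ + 1 with hR
    have hdo : DifferentiableOn ℂ
        (fun w => ∑' j : ℕ, (2 : ℂ) ^ (j + 1) *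
          (Complex.exp (w / 2 ^ (j + 1)) - 1 - w / 2 ^ (j + 1))) (Metric.ball 0 R) := by
      apply differentiableOn_tsum_of_summable_norm
        (u := fun j : ℕ => (1/2 : ℝ) ^ (j + 1) * (R ^ 2 * Real.exp R))
      · exact ((summable_geometric_of_lt_one (by norm_num) (by norm_num)).comp_injective
          (add_left_injective 1)).mul_right _
      · intro j
        apply Differentiable.differentiableOn
        have hdiv : Differentiable ℂ (fun w : ℂ => w / 2 ^ (j + 1)) :=
          differentiable_id.div_const _
        exact ((( Complex.differentiable_exp.comp hdiv).sub (differentiable_const 1)).sub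
          hdiv).const_mul _
      · exact Metric.isOpen_ball
      · intro j w hw
        have hwR : ‖w‖ < R := by simpa using hw
        have ha1 : (1:ℝ) ≤ 2 ^ (j + 1) := one_le_pow₀ (by norm_num)
        have hwnorm : ‖w / (2:ℂ) ^ (j + 1)‖ = ‖w‖ / 2 ^ (j + 1) := by
          rw [norm_div, norm_pow]
          norm_num
        have h2norm : ‖(2:ℂ) ^ (j + 1)‖ = 2 ^ (j + 1) := by
          rw [norm_pow]; norm_num
        have hb := expBound (w / 2 ^ (j + 1))
        have hdivle : ‖w‖ / 2 ^ (j + 1) ≤ R :=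
          le_trans (div_le_self (norm_nonneg w) ha1) hwR.le
        calc ‖(2:ℂ) ^ (j + 1) * (Complex.exp (w / 2 ^ (j + 1)) - 1 - w / 2 ^ (j + 1))‖
            = 2 ^ (j + 1) * ‖Complex.exp (w / 2 ^ (j + 1)) - 1 - w / 2 ^ (j + 1)‖ := by
              rw [norm_mul, h2norm]
          _ ≤ 2 ^ (j + 1) * (‖w / (2:ℂ) ^ (j + 1)‖ ^ 2 * Real.exp ‖w / (2:ℂ) ^ (j + 1)‖) := by
              exact mul_le_mul_of_nonneg_left hb (by positivity)
          _ = ‖w‖ ^ 2 / 2 ^ (j + 1) * Real.exp (‖w‖ / 2 ^ (j + 1)) := by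
              rw [hwnorm, div_pow]
              field_simp
          _ ≤ R ^ 2 / 2 ^ (j + 1) * Real.exp R := by
              apply mul_le_mul _ (Real.exp_le_exp.mpr hdivle) (Real.exp_nonneg _) (by positivity)
              apply div_le_div_of_nonneg_right _ (by positivity)
              · exact pow_le_pow_left₀ (norm_nonneg w) hwR.le 2
          _ = (1/2 : ℝ) ^ (j + 1) * (R ^ 2 * Real.exp R) := by
              rw [div_pow, one_pow]
              ring
    have hball : z₀ ∈ Metric.ball (0:ℂ) R := by
      simp [hR]
    have := hdo.differentiableAt (Metric.isOpen_ball.mem_nhds hball)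
    have hcongr : H = fun w => ∑' j : ℕ, (2 : ℂ) ^ (j + 1) *
        (Complex.exp (w / 2 ^ (j + 1)) - 1 - w / 2 ^ (j + 1)) := funext part3
    rw [hcongr]
    exact this
  · -- functional equation
    intro z
    have hne : ∀ n : ℕ, ((n + 2).factorial : ℂ) * ((2 : ℂ) ^ (n + 1) - 1) ≠ 0 := fun n =>
      mul_ne_zero (by exact_mod_cast (n+2).factorial_ne_zero) (two_pow_sub_one_ne n)
    have heq2 : ∀ n : ℕ,
        (2 * z) ^ (n + 2) / (((n + 2).factorial : ℂ) * ((2 : ℂ) ^ (n + 1) - 1))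
        = 2 * (z ^ (n + 2) / (((n + 2).factorial : ℂ) * ((2 : ℂ) ^ (n + 1) - 1)))
          + 2 * (z ^ (n + 2) / ((n + 2).factorial : ℂ)) := by
      intro n
      have hf : ((n + 2).factorial : ℂ) ≠ 0 := by exact_mod_cast (n+2).factorial_ne_zero
      have h21 := two_pow_sub_one_ne n
      rw [mul_pow]
      field_simp
      ring_nf
    have h1 : HasSum (fun n : ℕ =>
        2 * (z ^ (n + 2) / (((n + 2).factorial : ℂ) * ((2 : ℂ) ^ (n + 1) - 1)))
          + 2 * (z ^ (n + 2) / ((n + 2).factorial : ℂ)))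
        (2 * (∑' j : ℕ, (2 : ℂ) ^ (j + 1) *
            (Complex.exp (z / 2 ^ (j + 1)) - 1 - z / 2 ^ (j + 1)))
          + 2 * (Complex.exp z - 1 - z)) :=
      (((auxA z).1).mul_left 2).add ((expAux z).mul_left 2)
    have h2 : HasSum (fun n : ℕ =>
        (2 * z) ^ (n + 2) / (((n + 2).factorial : ℂ) * ((2 : ℂ) ^ (n + 1) - 1)))
        (2 * (∑' j : ℕ, (2 : ℂ) ^ (j + 1) *
            (Complex.exp (z / 2 ^ (j + 1)) - 1 - z / 2 ^ (j + 1)))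
          + 2 * (Complex.exp z - 1 - z)) := by
      rw [show (fun n : ℕ =>
        (2 * z) ^ (n + 2) / (((n + 2).factorial : ℂ) * ((2 : ℂ) ^ (n + 1) - 1)))
        = fun n : ℕ =>
        2 * (z ^ (n + 2) / (((n + 2).factorial : ℂ) * ((2 : ℂ) ^ (n + 1) - 1)))
          + 2 * (z ^ (n + 2) / ((n + 2).factorial : ℂ)) from funext heq2]
      exact h1
    rw [hH (2 * z), h2.tsum_eq, part3 z]
  · -- growth bound
    intro z
    have hnorm_eq : ∀ n : ℕ,
        ‖z ^ (n + 2) / (((n + 2).factorial : ℂ) * ((2 : ℂ) ^ (n + 1) - 1))‖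
        = ‖z‖ ^ (n + 2) / (((n + 2).factorial : ℝ) * ((2:ℝ) ^ (n + 1) - 1)) := by
      intro n
      rw [norm_div, norm_mul, norm_pow, norm_two_pow_sub_one]
      norm_num
    have hb : ∀ n : ℕ,
        ‖z ^ (n + 2) / (((n + 2).factorial : ℂ) * ((2 : ℂ) ^ (n + 1) - 1))‖
        ≤ 4 * ((‖z‖ / 2) ^ (n + 2) / ((n + 2).factorial : ℝ)) := by
      intro n
      rw [hnorm_eq n, div_pow]
      have hfp : (0:ℝ) < ((n + 2).factorial : ℝ) := by exact_mod_cast (n+2).factorial_pos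
      have hp : (2:ℝ) ≤ 2 ^ (n + 1) := by
        calc (2:ℝ) = 2 ^ 1 := by norm_num
        _ ≤ 2 ^ (n + 1) := pow_le_pow_right₀ (by norm_num) (by omega)
      have h2e : (2:ℝ) ^ (n + 2) = 2 * 2 ^ (n + 1) := by
        rw [pow_succ]; ring
      have hX : (0:ℝ) ≤ ‖z‖ ^ (n + 2) := by positivity
      have hden : (0:ℝ) < ((n + 2).factorial : ℝ) * ((2:ℝ) ^ (n + 1) - 1) :=
        mul_pos hfp (by linarith)
      have hRHS : 4 * (‖z‖ ^ (n + 2) / (2:ℝ) ^ (n + 2) / ((n + 2).factorial : ℝ))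
          = (4 * ‖z‖ ^ (n + 2)) / ((2:ℝ) ^ (n + 2) * ((n + 2).factorial : ℝ)) := by
        ring
      rw [hRHS, div_le_div_iff₀ hden (by positivity)]
      have hkey : (0:ℝ) ≤ (‖z‖ ^ (n + 2) * ((n + 2).factorial : ℝ)) * (2 * 2 ^ (n+1) - 4) :=
        mul_nonneg (mul_nonneg hX hfp.le) (by linarith)
      rw [h2e]
      nlinarith [hkey]
    have hsb : Summable (fun n : ℕ => 4 * ((‖z‖ / 2) ^ (n + 2) / ((n + 2).factorial : ℝ))) :=
      ((Real.summable_pow_div_factorial (‖z‖/2)).comp_injective (add_left_injective 2)).mul_left 4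
    have hsn : Summable (fun n : ℕ =>
        ‖z ^ (n + 2) / (((n + 2).factorial : ℂ) * ((2 : ℂ) ^ (n + 1) - 1))‖) :=
      Summable.of_nonneg_of_le (fun n => norm_nonneg _) hb hsb
    have step1 : ‖H z‖ ≤ ∑' n : ℕ,
        ‖z ^ (n + 2) / (((n + 2).factorial : ℂ) * ((2 : ℂ) ^ (n + 1) - 1))‖ := by
      rw [hH z]
      exact norm_tsum_le_tsum_norm hsn
    have step2 : (∑' n : ℕ,
        ‖z ^ (n + 2) / (((n + 2).factorial : ℂ) * ((2 : ℂ) ^ (n + 1) - 1))‖)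
        ≤ ∑' n : ℕ, 4 * ((‖z‖ / 2) ^ (n + 2) / ((n + 2).factorial : ℝ)) :=
      Summable.tsum_le_tsum hb hsn hsb
    have hsum2 : Summable (fun n : ℕ => (‖z‖/2) ^ (n + 2) / ((n + 2).factorial : ℝ)) :=
      (Real.summable_pow_div_factorial (‖z‖/2)).comp_injective (add_left_injective 2)
    have hle3 : (∑' n : ℕ, (‖z‖/2) ^ (n + 2) / ((n + 2).factorial : ℝ))
        ≤ Real.exp (‖z‖/2) := by
      rw [real_exp_tsum]
      exact Summable.tsum_le_tsum_of_inj (fun n => n + 2) (add_left_injective 2)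
        (fun c _ => by positivity) (fun n => le_refl _) hsum2
        (Real.summable_pow_div_factorial (‖z‖/2))
    have step3 : (∑' n : ℕ, 4 * ((‖z‖ / 2) ^ (n + 2) / ((n + 2).factorial : ℝ)))
        ≤ 4 * Real.exp (‖z‖ / 2) := by
      rw [tsum_mul_left]
      linarith
    linarith
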